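/- Let K/k be a finite Galois extension with Galois group Γ, and let (β_a, μ(a,b)) be a descent datum on a K-linear abelian category C such that each β_a is exact and additive. Then the category C^Γ of descent objects (x, {a_x}) is abelian, and the forgetful functor C^Γ → C is exact. -/

import Mathlib

open CategoryTheory CategoryTheory.Limits

universe v u

section

variable (Γ : Type*) [Group Γ] (C : Type u) [Category.{v} C]

/-- A descent datum on a category `C` for a group `Γ`: equivalences `β_a` together with
natural isomorphisms `μ(a,b) : β_{ab} ≅ β_a β_b` satisfying the cocycle coherence
condition. -/
structure DescentDatum where
  β : Γ → C ⥤ C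
  μ : ∀ a b : Γ, β (a * b) ≅ β b ⋙ β a
  coh : ∀ (a b c : Γ) (x : C),
    (μ (a * b) c).hom.app x ≫ (μ a b).hom.app ((β c).obj x) =
      eqToHom (by rw [mul_assoc]) ≫
        (μ a (b * c)).hom.app x ≫ (β a).map ((μ b c).hom.app x)

variable {Γ C}

/-- Descent objects: `x ∈ C` with isomorphisms `a_x : x ≅ β_a x` compatible with `μ`. -/
structure DescentObj (D : DescentDatum Γ C) where
  pt : C
  iso : ∀ a : Γ, pt ≅ (D.β a).obj pt
  compat : ∀ a b : Γ,
    (iso (a * b)).hom ≫ (D.μ a b).hom.app pt = (iso a).hom ≫ (D.β a).map (iso b).hom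

/-- Morphisms of descent objects: morphisms in `C` commuting with the structure
isomorphisms. -/
instance {D : DescentDatum Γ C} : Category (DescentObj D) where
  Hom X Y := {f : X.pt ⟶ Y.pt // ∀ a : Γ, f ≫ (Y.iso a).hom = (X.iso a).hom ≫ (D.β a).map f}
  id X := ⟨𝟙 X.pt, fun a => by simp⟩
  comp f g := ⟨f.1 ≫ g.1, fun a => by
    rw [Category.assoc, g.2 a, ← Category.assoc, f.2 a, Category.assoc,
      ← Functor.map_comp]⟩
  id_comp f := by apply Subtype.ext; simp
  comp_id f := by apply Subtype.ext; simp
  assoc f g h := by apply Subtype.ext; simp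

/-- The forgetful functor `C^Γ → C`. -/
def forgetDescent (D : DescentDatum Γ C) : DescentObj D ⥤ C where
  obj X := X.pt
  map f := f.1


section Aux

variable {Γ : Type*} [Group Γ] {C : Type u} [Category.{v} C]

namespace DescentAux

theorem hom_ext {D : DescentDatum Γ C} {X Y : DescentObj D} {f g : X ⟶ Y}
    (h : f.1 = g.1) : f = g := Subtype.ext h

@[simp] theorem comp_val {D : DescentDatum Γ C} {X Y Z : DescentObj D}
    (f : X ⟶ Y) (g : Y ⟶ Z) : (f ≫ g).1 = f.1 ≫ g.1 := rfl

@[simp] theorem id_val {D : DescentDatum Γ C} (X : DescentObj D) :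
    (𝟙 X : X ⟶ X).1 = 𝟙 X.pt := rfl

@[simp] theorem forget_obj {D : DescentDatum Γ C} (X : DescentObj D) :
    (forgetDescent D).obj X = X.pt := rfl

@[simp] theorem forget_map {D : DescentDatum Γ C} {X Y : DescentObj D} (f : X ⟶ Y) :
    (forgetDescent D).map f = f.1 := rfl

section Preadditive

variable [Preadditive C]

/-- Compatible morphisms form an additive subgroup. -/
def homAddSubgroup (D : DescentDatum Γ C) (hadd : ∀ a, (D.β a).Additive)
    (X Y : DescentObj D) : AddSubgroup (X.pt ⟶ Y.pt) where
  carrier := {f | ∀ a, f ≫ (Y.iso a).hom = (X.iso a).hom ≫ (D.β a).map f}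
  add_mem' := fun {f g} hf hg a => by
    haveI := hadd a
    rw [Preadditive.add_comp, hf a, hg a, Functor.map_add, Preadditive.comp_add]
  zero_mem' := fun a => by
    haveI := hadd a
    simp
  neg_mem' := fun {f} hf a => by
    haveI := hadd a
    rw [Preadditive.neg_comp, hf a, Functor.map_neg, Preadditive.comp_neg]

/-- The preadditive structure on descent objects. -/
def descentPreadditive (D : DescentDatum Γ C) (hadd : ∀ a, (D.β a).Additive) :
    Preadditive (DescentObj D) where
  homGroup X Y := inferInstanceAs (AddCommGroup (homAddSubgroup D hadd X Y))
  add_comp := by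
    intro P Q R f f' g
    apply hom_ext
    exact Preadditive.add_comp _ _ _ f.1 f'.1 g.1
  comp_add := by
    intro P Q R f g g'
    apply hom_ext
    exact Preadditive.comp_add _ _ _ f.1 g.1 g'.1

theorem forget_additive (D : DescentDatum Γ C) (hadd : ∀ a, (D.β a).Additive) :
    letI := descentPreadditive D hadd
    (forgetDescent D).Additive :=
  letI := descentPreadditive D hadd
  { map_add := rfl }

end Preadditive

instance (D : DescentDatum Γ C) : (forgetDescent D).ReflectsIsomorphisms := by
  constructor
  intro X Y f hf
  have hf1 : IsIso f.1 := hf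
  refine ⟨⟨⟨inv f.1, fun a => ?_⟩, ?_, ?_⟩⟩
  · rw [IsIso.inv_comp_eq, ← Category.assoc, f.2 a, Category.assoc, ← Functor.map_comp,
      IsIso.hom_inv_id]
    simp
  · apply hom_ext; simp
  · apply hom_ext; simp

section Limits

variable {J : Type*} [Category J] {D : DescentDatum Γ C}

/-- The structure isomorphisms assemble into a natural isomorphism of diagrams. -/
def nuIso (F : J ⥤ DescentObj D) (a : Γ) :
    (F ⋙ forgetDescent D) ≅ (F ⋙ forgetDescent D) ⋙ D.β a :=
  NatIso.ofComponents (fun j => (F.obj j).iso a) (fun {j j'} f => (F.map f).2 a)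

variable [∀ a : Γ, PreservesLimitsOfShape J (D.β a)]
variable {F : J ⥤ DescentObj D} {c : Cone (F ⋙ forgetDescent D)}

theorem lifted_key (hc : IsLimit c) (e : Γ) (j : J) :
    (hc.conePointsIsoOfNatIso (isLimitOfPreserves (D.β e) hc) (nuIso F e)).hom ≫
      (D.β e).map (c.π.app j) = c.π.app j ≫ ((F.obj j).iso e).hom := by
  exact
    hc.conePointsIsoOfNatIso_hom_comp (isLimitOfPreserves (D.β e) hc) (nuIso F e) j

/-- Lift the limit point of `C` to a descent object. -/
noncomputable def liftedObj (hc : IsLimit c) : DescentObj D where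
  pt := c.pt
  iso a := hc.conePointsIsoOfNatIso (isLimitOfPreserves (D.β a) hc) (nuIso F a)
  compat a b := by
    apply (isLimitOfPreserves (D.β a) (isLimitOfPreserves (D.β b) hc)).hom_ext
    intro j
    have hnat := (D.μ a b).hom.naturality (c.π.app j)
    simp only [Functor.comp_map, Functor.comp_obj, forget_obj, Functor.const_obj_obj] at hnat
    simp only [Functor.mapCone_π_app, Functor.mapCone_pt, Category.assoc]
    erw [← hnat, ← Category.assoc, lifted_key hc (a * b) j, Category.assoc,
      (F.obj j).compat a b]
    conv_rhs => erw [← Functor.map_comp, lifted_key hc b j, Functor.map_comp,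
      ← Category.assoc, lifted_key hc a j]
    exact (Category.assoc _ _ _).symm
  
/-- Lift a limit cone in `C` to a cone of descent objects. -/
noncomputable def liftedCone (hc : IsLimit c) : Cone F where
  pt := liftedObj hc
  π :=
    { app := fun j => ⟨c.π.app j, fun a => (lifted_key hc a j).symm⟩
      naturality := fun j j' f => by
        apply hom_ext
        exact (Category.id_comp _).trans (c.w f).symm }

/-- The lifted cone is a limit cone. -/
noncomputable def liftedIsLimit (hc : IsLimit c) : IsLimit (liftedCone hc) where
  lift s := ⟨hc.lift ((forgetDescent D).mapCone s), by
    intro a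
    apply (isLimitOfPreserves (D.β a) hc).hom_ext
    intro j
    simp only [Functor.mapCone_π_app, Functor.mapCone_pt, Category.assoc, liftedCone,
      liftedObj]
    erw [Category.assoc, lifted_key hc a j, ← Category.assoc, hc.fac ((forgetDescent D).mapCone s) j,
      ← Functor.map_comp, hc.fac ((forgetDescent D).mapCone s) j]
    exact (s.π.app j).2 a⟩
  fac s j := hom_ext (hc.fac ((forgetDescent D).mapCone s) j)
  uniq s m hm := hom_ext (hc.uniq ((forgetDescent D).mapCone s) m.1
    (fun j => congrArg Subtype.val (hm j)))

/-- Descent objects have limits of shape `J`. -/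
theorem descentHasLimitsOfShape [HasLimitsOfShape J C] :
    HasLimitsOfShape J (DescentObj D) :=
  ⟨fun F => HasLimit.mk ⟨liftedCone (limit.isLimit (F ⋙ forgetDescent D)),
    liftedIsLimit (limit.isLimit (F ⋙ forgetDescent D))⟩⟩

/-- The forgetful functor preserves limits of shape `J`. -/
theorem descentForgetPreservesLimitsOfShape [HasLimitsOfShape J C] :
    PreservesLimitsOfShape J (forgetDescent D) := by
  constructor
  intro F
  constructor
  intro s hs
  let hc := limit.isLimit (F ⋙ forgetDescent D)
  refine ⟨IsLimit.ofIsoLimit (IsLimit.ofIsoLimit hc ?_)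
    ((Cones.functoriality F (forgetDescent D)).mapIso
      ((liftedIsLimit hc).uniqueUpToIso hs))⟩
  exact Cones.ext (Iso.refl _) (fun j => by simp [liftedCone]; exact (Category.id_comp _).symm)

end Limits

section Colimits

variable {J : Type*} [Category J] {D : DescentDatum Γ C}
variable [∀ a : Γ, PreservesColimitsOfShape J (D.β a)]
variable {F : J ⥤ DescentObj D} {c : Cocone (F ⋙ forgetDescent D)}

theorem colifted_key (hc : IsColimit c) (e : Γ) (j : J) :
    c.ι.app j ≫
      (hc.coconePointsIsoOfNatIso (isColimitOfPreserves (D.β e) hc) (nuIso F e)).hom =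
    ((F.obj j).iso e).hom ≫ (D.β e).map (c.ι.app j) := by
  exact
    hc.comp_coconePointsIsoOfNatIso_hom (isColimitOfPreserves (D.β e) hc) (nuIso F e) j

/-- Lift the colimit point of `C` to a descent object. -/
noncomputable def coliftedObj (hc : IsColimit c) : DescentObj D where
  pt := c.pt
  iso a := hc.coconePointsIsoOfNatIso (isColimitOfPreserves (D.β a) hc) (nuIso F a)
  compat a b := by
    apply hc.hom_ext
    intro j
    have hnat := (D.μ a b).hom.naturality (c.ι.app j)
    simp only [Functor.comp_map, Functor.comp_obj, forget_obj, Functor.const_obj_obj] at hnat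
    erw [← Category.assoc, colifted_key hc (a * b) j, Category.assoc, hnat,
      ← Category.assoc, (F.obj j).compat a b]
    conv_rhs => erw [← Category.assoc, colifted_key hc a j, Category.assoc,
      ← Functor.map_comp, colifted_key hc b j]
    exact (Category.assoc (obj := C) _ _ _).trans (congrArg _ ((D.β a).map_comp _ _).symm)

/-- Lift a colimit cocone in `C` to a cocone of descent objects. -/
noncomputable def coliftedCocone (hc : IsColimit c) : Cocone F where
  pt := coliftedObj hc
  ι :=
    { app := fun j => ⟨c.ι.app j, fun a => colifted_key hc a j⟩
      naturality := fun j j' f => by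
        apply hom_ext
        exact (c.w f).trans (Category.comp_id _).symm }

/-- The lifted cocone is a colimit cocone. -/
noncomputable def coliftedIsColimit (hc : IsColimit c) : IsColimit (coliftedCocone hc) where
  desc s := ⟨hc.desc ((forgetDescent D).mapCocone s), by
    intro a
    apply hc.hom_ext
    intro j
    simp only [coliftedCocone, coliftedObj]
    erw [← Category.assoc, hc.fac ((forgetDescent D).mapCocone s) j, ← Category.assoc,
      colifted_key hc a j, Category.assoc, ← Functor.map_comp,
      hc.fac ((forgetDescent D).mapCocone s) j]
    exact (s.ι.app j).2 a⟩
  fac s j := hom_ext (hc.fac ((forgetDescent D).mapCocone s) j)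
  uniq s m hm := hom_ext (hc.uniq ((forgetDescent D).mapCocone s) m.1
    (fun j => congrArg Subtype.val (hm j)))

/-- Descent objects have colimits of shape `J`. -/
theorem descentHasColimitsOfShape [HasColimitsOfShape J C] :
    HasColimitsOfShape J (DescentObj D) :=
  ⟨fun F => HasColimit.mk ⟨coliftedCocone (colimit.isColimit (F ⋙ forgetDescent D)),
    coliftedIsColimit (colimit.isColimit (F ⋙ forgetDescent D))⟩⟩

/-- The forgetful functor preserves colimits of shape `J`. -/
theorem descentForgetPreservesColimitsOfShape [HasColimitsOfShape J C] :
    PreservesColimitsOfShape J (forgetDescent D) := by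
  constructor
  intro F
  constructor
  intro s hs
  let hc := colimit.isColimit (F ⋙ forgetDescent D)
  refine ⟨IsColimit.ofIsoColimit (IsColimit.ofIsoColimit hc ?_)
    ((Cocones.functoriality F (forgetDescent D)).mapIso
      ((coliftedIsColimit hc).uniqueUpToIso hs))⟩
  exact Cocones.ext (Iso.refl _) (fun j => by simp [coliftedCocone]; exact Category.comp_id _)

end Colimits

section Comparison

variable {A : Type*} [Category A] {B : Type*} [Category B]
variable [Preadditive A] [HasKernels A] [HasCokernels A] [Abelian B]
variable (F : A ⥤ B) [F.Additive] [PreservesFiniteLimits F] [PreservesFiniteColimits F]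

/-- The abelian coimage is preserved. -/
noncomputable def coimageObjIso {X Y : A} (f : X ⟶ Y) :
    F.obj (Abelian.coimage f) ≅ Abelian.coimage (F.map f) :=
  PreservesCokernel.iso F (kernel.ι f) ≪≫
    cokernel.mapIso (F.map (kernel.ι f)) (kernel.ι (F.map f))
      (PreservesKernel.iso F f) (Iso.refl _)
      (by
        simp only [Iso.refl_hom, Category.comp_id, PreservesKernel.iso_hom]
        exact (kernelComparison_comp_ι f F).symm)

/-- The abelian image is preserved. -/
noncomputable def imageObjIso {X Y : A} (f : X ⟶ Y) :
    F.obj (Abelian.image f) ≅ Abelian.image (F.map f) :=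
  PreservesKernel.iso F (cokernel.π f) ≪≫
    kernel.mapIso (F.map (cokernel.π f)) (cokernel.π (F.map f))
      (Iso.refl _) (PreservesCokernel.iso F f)
      (by
        apply (cancel_mono (PreservesCokernel.iso F f).inv).1
        simp only [Category.assoc, Iso.hom_inv_id]
        simp only [Iso.refl_hom, PreservesCokernel.iso_inv, Category.id_comp, Category.comp_id]
        exact (π_comp_cokernelComparison f F).symm)

theorem comparison_map {X Y : A} (f : X ⟶ Y) :
    Abelian.coimageImageComparison (F.map f) =
      (coimageObjIso F f).inv ≫ F.map (Abelian.coimageImageComparison f) ≫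
        (imageObjIso F f).hom := by
  ext
  dsimp [imageObjIso, coimageObjIso, cokernel.map, kernel.mapIso, cokernel.mapIso, kernel.map]
  simp only [Abelian.coimage_image_factorisation, PreservesKernel.iso_hom, Category.assoc,
    kernel.lift_ι, Category.comp_id, PreservesCokernel.iso_inv,
    cokernel.π_desc_assoc, Category.id_comp]
  erw [kernelComparison_comp_ι (cokernel.π f) F, π_comp_cokernelComparison_assoc (kernel.ι f) F]
  rw [← F.map_comp, ← F.map_comp]
  congr 1
  exact (Abelian.coimage_image_factorisation f).symm

theorem isIso_coimageImageComparison [F.ReflectsIsomorphisms] {X Y : A} (f : X ⟶ Y) :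
    IsIso (Abelian.coimageImageComparison f) := by
  have h : F.map (Abelian.coimageImageComparison f) =
      (coimageObjIso F f).hom ≫ Abelian.coimageImageComparison (F.map f) ≫
        (imageObjIso F f).inv := by
    rw [comparison_map F f]
    simp
  have : IsIso (F.map (Abelian.coimageImageComparison f)) := by
    rw [h]; infer_instance
  exact isIso_of_reflects_iso _ F

end Comparison

end DescentAux

end Aux

/-- for a finite Galois extension `K/k` with Galois group `Γ` and a descent
datum `(β_a, μ(a,b))` on a `K`-linear abelian category `C` (each `β_a` additive, exact, and
`a`-semilinear on morphisms), the category `C^Γ` of descent objects is abelian and the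
forgetful functor `C^Γ → C` is exact. -/
theorem descent_category_abelian (k K : Type*) [Field k] [Field K] [Algebra k K]
    [IsGalois k K] [FiniteDimensional k K]
    (C : Type u) [Category.{v} C] [Abelian C] [CategoryTheory.Linear K C]
    (D : DescentDatum (K ≃ₐ[k] K) C)
    (hadd : ∀ a, (D.β a).Additive)
    (hexact : ∀ a, Nonempty (PreservesFiniteLimits (D.β a)) ∧
      Nonempty (PreservesFiniteColimits (D.β a)))
    (hequiv : ∀ a, (D.β a).IsEquivalence)
    (hsemi : ∀ (a : K ≃ₐ[k] K) (x y : C) (f : x ⟶ y) (lam : K),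
      (D.β a).map (lam • f) = (a lam) • (D.β a).map f) :
    Nonempty (Abelian (DescentObj D)) ∧
      Nonempty (PreservesFiniteLimits (forgetDescent D)) ∧
      Nonempty (PreservesFiniteColimits (forgetDescent D)) := by
  clear hequiv hsemi
  letI := DescentAux.descentPreadditive D hadd
  haveI : (forgetDescent D).Additive := DescentAux.forget_additive D hadd
  haveI h1 : ∀ a, PreservesFiniteLimits (D.β a) := fun a => (hexact a).1.some
  haveI h2 : ∀ a, PreservesFiniteColimits (D.β a) := fun a => (hexact a).2.some
  haveI hfl : HasFiniteLimits (DescentObj D) :=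
    ⟨fun J _ _ => DescentAux.descentHasLimitsOfShape⟩
  haveI hfc : HasFiniteColimits (DescentObj D) :=
    ⟨fun J _ _ => DescentAux.descentHasColimitsOfShape⟩
  haveI hpfl : PreservesFiniteLimits (forgetDescent D) :=
    ⟨fun J _ _ => DescentAux.descentForgetPreservesLimitsOfShape⟩
  haveI hpfc : PreservesFiniteColimits (forgetDescent D) :=
    ⟨fun J _ _ => DescentAux.descentForgetPreservesColimitsOfShape⟩
  haveI : ∀ {X Y : DescentObj D} (f : X ⟶ Y),
      IsIso (Abelian.coimageImageComparison f) := fun f =>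
    DescentAux.isIso_coimageImageComparison (forgetDescent D) f
  exact ⟨⟨Abelian.ofCoimageImageComparisonIsIso⟩, ⟨hpfl⟩, ⟨hpfc⟩⟩


end
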